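/- Let A be a non-unital Banach algebra and let A# = A ⊕ ℂ be its unitization (with product (a,α)(b,β) = (ab + βa + αb, αβ) and ℓ¹-norm). Then A# is approximately cyclic amenable if and only if A is approximately cyclic amenable. -/

import Mathlib

open Filter Topology

noncomputable section

universe u v

variable {A : Type u} [NonUnitalNormedRing A] [NormedSpace ℂ A]
  [IsScalarTower ℂ A A] [SMulCommClass ℂ A A]

/-- The left module action of `A` on its dual `A*`: `(a · f) b = f (b * a)`. -/
def lAct (a : A) (f : A →L[ℂ] ℂ) : A →L[ℂ] ℂ :=
  f.comp ((ContinuousLinearMap.mul ℂ A).flip a)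

/-- The right module action of `A` on its dual `A*`: `(f · a) b = f (a * b)`. -/
def rAct (f : A →L[ℂ] ℂ) (a : A) : A →L[ℂ] ℂ :=
  f.comp (ContinuousLinearMap.mul ℂ A a)

/-- A bounded linear `D : A → A*` is a derivation if `D (a * b) = D a · b + a · D b`. -/
def IsDerivation (D : A →L[ℂ] (A →L[ℂ] ℂ)) : Prop :=
  ∀ a b : A, D (a * b) = rAct (D a) b + lAct a (D b)

/-- A derivation `D : A → A*` is cyclic if `⟨D a, b⟩ + ⟨D b, a⟩ = 0` for all `a, b`. -/
def IsCyclicDeriv (D : A →L[ℂ] (A →L[ℂ] ℂ)) : Prop :=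
  ∀ a b : A, D a b + D b a = 0

/-- `D : A → A*` is approximately inner if there is a net `(f i)` in `A*` with
`D a = lim_i (a · f i - f i · a)` in norm, for every `a ∈ A`. -/
def IsApproxInner {A : Type u} [NonUnitalNormedRing A] [NormedSpace ℂ A]
    [IsScalarTower ℂ A A] [SMulCommClass ℂ A A] (D : A →L[ℂ] (A →L[ℂ] ℂ)) : Prop :=
  ∃ (ι : Type u) (l : Filter ι) (f : ι → (A →L[ℂ] ℂ)), l.NeBot ∧
    ∀ a : A, Tendsto (fun i => lAct a (f i) - rAct (f i) a) l (𝓝 (D a))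

/-- `D : A → A*` is inner if `D a = a · f - f · a` for some fixed `f ∈ A*`. -/
def IsInner (D : A →L[ℂ] (A →L[ℂ] ℂ)) : Prop :=
  ∃ f : A →L[ℂ] ℂ, ∀ a : A, D a = lAct a f - rAct f a

/-- A Banach algebra is approximately cyclic amenable if every cyclic bounded
derivation `D : A → A*` is approximately inner. -/
def ApproxCyclicAmenable (A : Type u) [NonUnitalNormedRing A] [NormedSpace ℂ A]
    [IsScalarTower ℂ A A] [SMulCommClass ℂ A A] : Prop :=
  ∀ D : A →L[ℂ] (A →L[ℂ] ℂ), IsDerivation D → IsCyclicDeriv D → IsApproxInner D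

/-- A Banach algebra is cyclic amenable if every cyclic bounded derivation
`D : A → A*` is inner. -/
def CyclicAmenable (A : Type u) [NonUnitalNormedRing A] [NormedSpace ℂ A]
    [IsScalarTower ℂ A A] [SMulCommClass ℂ A A] : Prop :=
  ∀ D : A →L[ℂ] (A →L[ℂ] ℂ), IsDerivation D → IsCyclicDeriv D → IsInner D


namespace UnitizationACA

variable {A : Type u} [NonUnitalNormedRing A] [NormedSpace ℂ A]
  [IsScalarTower ℂ A A] [SMulCommClass ℂ A A]

@[simp] lemma lAct_apply (a b : A) (f : A →L[ℂ] ℂ) : lAct a f b = f (b * a) := rfl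
@[simp] lemma rAct_apply (a b : A) (f : A →L[ℂ] ℂ) : rAct f a b = f (a * b) := rfl

/-- The projection `A♯ → A` as a continuous linear map. -/
def sndL : WithLp 1 (Unitization ℂ A) →L[ℂ] A :=
  LinearMap.mkContinuous
    { toFun := fun x => (WithLp.equiv 1 (Unitization ℂ A) x).snd
      map_add' := fun x y => by simp [WithLp.ofLp_add]
      map_smul' := fun c x => by simp [WithLp.ofLp_smul] }
    1 (fun x => by
      rw [one_mul, WithLp.unitization_norm_def]
      exact le_add_of_nonneg_left (norm_nonneg _))

/-- The inclusion `A → A♯` as a continuous linear map. -/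
def inrL : A →L[ℂ] WithLp 1 (Unitization ℂ A) :=
  LinearMap.mkContinuous
    { toFun := fun a => (WithLp.equiv 1 (Unitization ℂ A)).symm a
      map_add' := fun x y => by simp [← WithLp.toLp_add, Unitization.inr_add]
      map_smul' := fun c x => by simp [← WithLp.toLp_smul, Unitization.inr_smul] }
    1 (fun a => by simpa using (WithLp.unitization_norm_inr (𝕜 := ℂ) a).le)

@[simp] lemma sndL_inrL (a : A) : sndL (inrL a) = a := by
  simp [sndL, inrL, LinearMap.mkContinuous_apply]

/-- Extension of a functional on `A` to `A♯` (vanishing on the unit), as a CLM. -/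
def extL : (A →L[ℂ] ℂ) →L[ℂ] (WithLp 1 (Unitization ℂ A) →L[ℂ] ℂ) :=
  (ContinuousLinearMap.compL ℂ (WithLp 1 (Unitization ℂ A)) A ℂ).flip sndL

/-- Restriction of a functional on `A♯` to `A`, as a CLM. -/
def restrL : (WithLp 1 (Unitization ℂ A) →L[ℂ] ℂ) →L[ℂ] (A →L[ℂ] ℂ) :=
  (ContinuousLinearMap.compL ℂ A (WithLp 1 (Unitization ℂ A)) ℂ).flip inrL

@[simp] lemma extL_apply (f : A →L[ℂ] ℂ) (x : WithLp 1 (Unitization ℂ A)) :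
    extL f x = f (sndL x) := rfl

@[simp] lemma restrL_apply (F : WithLp 1 (Unitization ℂ A) →L[ℂ] ℂ) (a : A) :
    restrL F a = F (inrL a) := rfl

lemma restrL_extL (g : A →L[ℂ] ℂ) : restrL (extL g) = g := by ext b; simp

lemma sndL_mul (x y : WithLp 1 (Unitization ℂ A)) :
    sndL (x * y) = (WithLp.equiv 1 (Unitization ℂ A) x).fst • sndL y
      + (WithLp.equiv 1 (Unitization ℂ A) y).fst • sndL x + sndL x * sndL y := by
  simp [sndL, LinearMap.mkContinuous_apply]

lemma inrL_mul (a b : A) : inrL (a * b) = inrL a * inrL b := by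
  apply (WithLp.equiv 1 (Unitization ℂ A)).injective
  simp [inrL, LinearMap.mkContinuous_apply, Unitization.inr_mul]

lemma ext_commutator (x : WithLp 1 (Unitization ℂ A)) (f : A →L[ℂ] ℂ) :
    lAct x (extL f) - rAct (extL f) x
      = extL (lAct (sndL x) f - rAct f (sndL x)) := by
  ext y
  simp only [ContinuousLinearMap.sub_apply, lAct_apply, rAct_apply, extL_apply, map_sub,
    sndL_mul, map_add, map_smul]
  ring

lemma restr_commutator (a : A) (F : WithLp 1 (Unitization ℂ A) →L[ℂ] ℂ) :
    restrL (lAct (inrL a) F - rAct F (inrL a))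
      = lAct a (restrL F) - rAct (restrL F) a := by
  ext b
  simp [← inrL_mul]

lemma restr_rAct (b : A) (F : WithLp 1 (Unitization ℂ A) →L[ℂ] ℂ) :
    restrL (rAct F (inrL b)) = rAct (restrL F) b := by
  ext c; simp [← inrL_mul]

lemma restr_lAct (a : A) (F : WithLp 1 (Unitization ℂ A) →L[ℂ] ℂ) :
    restrL (lAct (inrL a) F) = lAct a (restrL F) := by
  ext c; simp [← inrL_mul]

lemma equiv_one : (WithLp.equiv 1 (Unitization ℂ A)) 1 = 1 := rfl

lemma decomp (x : WithLp 1 (Unitization ℂ A)) :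
    x = inrL (sndL x) + ((WithLp.equiv 1 (Unitization ℂ A) x).fst : ℂ) • 1 := by
  apply (WithLp.equiv 1 (Unitization ℂ A)).injective
  simp only [WithLp.ofLp_add, WithLp.ofLp_smul, inrL, sndL, LinearMap.mkContinuous_apply,
    equiv_one]
  apply Unitization.ext <;> simp [show WithLp.ofLp (1 : WithLp 1 (Unitization ℂ A)) = 1 from rfl]

lemma rAct_one (g : WithLp 1 (Unitization ℂ A) →L[ℂ] ℂ) : rAct g 1 = g := by
  ext b; simp

lemma lAct_one (g : WithLp 1 (Unitization ℂ A) →L[ℂ] ℂ) : lAct (1 : WithLp 1 (Unitization ℂ A)) g = g := by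
  ext b; simp

/-- A derivation on the unitization annihilates the unit. -/
lemma deriv_one_eq_zero (D : WithLp 1 (Unitization ℂ A) →L[ℂ] (WithLp 1 (Unitization ℂ A) →L[ℂ] ℂ))
    (hD : IsDerivation D) : D 1 = 0 := by
  have h := hD 1 1
  rw [one_mul, rAct_one, lAct_one] at h
  have h' : D 1 + D 1 = D 1 + 0 := by rw [add_zero]; exact h.symm
  exact (add_left_cancel h')

end UnitizationACA

set_option maxHeartbeats 2000000 in
set_option synthInstance.maxHeartbeats 400000 in
/-- For a non-unital Banach algebra `A`, the unitization
`A♯ = A ⊕ ℂ` (with `ℓ¹`-norm) is approximately cyclic amenable if and only if `A` is. -/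
theorem unitization_approxCyclicAmenable_iff
    {A : Type u} [NonUnitalNormedRing A] [NormedSpace ℂ A]
    [IsScalarTower ℂ A A] [SMulCommClass ℂ A A] [CompleteSpace A]
    (hA : ¬ ∃ e : A, ∀ a : A, e * a = a ∧ a * e = a) :
    ApproxCyclicAmenable (WithLp 1 (Unitization ℂ A)) ↔ ApproxCyclicAmenable A := by
  open UnitizationACA in
  constructor
  · -- A♯ ACA → A ACA
    intro hS D hD hC
    set Ds : WithLp 1 (Unitization ℂ A) →L[ℂ] (WithLp 1 (Unitization ℂ A) →L[ℂ] ℂ) :=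
      UnitizationACA.extL.comp (D.comp UnitizationACA.sndL) with hDs
    have hDs_apply : ∀ x, Ds x = extL (D (sndL x)) := fun x => rfl
    have hDsDeriv : IsDerivation Ds := by
      intro x y
      ext c
      simp only [hDs_apply, ContinuousLinearMap.add_apply, lAct_apply, rAct_apply, extL_apply,
        sndL_mul, map_add, map_smul, hD (sndL x) (sndL y), smul_eq_mul,
        ContinuousLinearMap.smul_apply]
      have hc := hC (sndL x) (sndL y)
      linear_combination (-((WithLp.equiv 1 (Unitization ℂ A)) c).fst) * hc
    have hDsCyc : IsCyclicDeriv Ds := by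
      intro x y
      simpa only [hDs_apply, extL_apply] using hC (sndL x) (sndL y)
    obtain ⟨ι, l, F, hl, hF⟩ := hS Ds hDsDeriv hDsCyc
    refine ⟨ι, l, fun i => restrL (F i), hl, fun a => ?_⟩
    have h1 : Tendsto (fun i => restrL (lAct (inrL a) (F i) - rAct (F i) (inrL a))) l
        (𝓝 (restrL (Ds (inrL a)))) :=
      (restrL.continuous.tendsto _).comp (hF (inrL a))
    have h2 : restrL (Ds (inrL a)) = D a := by
      rw [hDs_apply, sndL_inrL, restrL_extL]
    simpa only [restr_commutator, h2] using h1
  · -- A ACA → A♯ ACA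
    intro hA' D hD hC
    have hD1 : D 1 = 0 := deriv_one_eq_zero D hD
    set D0 : A →L[ℂ] (A →L[ℂ] ℂ) := UnitizationACA.restrL.comp (D.comp UnitizationACA.inrL)
      with hD0
    have hD0_apply : ∀ a, D0 a = restrL (D (inrL a)) := fun a => rfl
    have hDinr1 : ∀ a : A, D (inrL a) 1 = 0 := by
      intro a
      have := hC (inrL a) 1
      rw [hD1] at this
      simpa using this
    have hDx : ∀ x, D x = extL (D0 (sndL x)) := by
      intro x
      have hx : D x = D (inrL (sndL x)) := by
        conv_lhs => rw [decomp x]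
        rw [map_add, map_smul, hD1]
        have hz : (((WithLp.equiv 1 (Unitization ℂ A)) x).fst : ℂ) •
            (0 : WithLp 1 (Unitization ℂ A) →L[ℂ] ℂ) = 0 := by
          ext z; simp
        rw [hz, add_zero]
      ext y
      rw [hx]
      conv_lhs => rw [decomp y]
      rw [map_add, map_smul, hDinr1, smul_zero, add_zero]
      simp [hD0_apply]
    have hD0Deriv : IsDerivation D0 := by
      intro a b
      rw [hD0_apply, inrL_mul, hD (inrL a) (inrL b), map_add, restr_rAct, restr_lAct]
      rfl
    have hD0Cyc : IsCyclicDeriv D0 := by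
      intro a b
      simpa only [hD0_apply, restrL_apply] using hC (inrL a) (inrL b)
    obtain ⟨ι, l, f, hl, hf⟩ := hA' D0 hD0Deriv hD0Cyc
    refine ⟨ι, l, fun i => extL (f i), hl, fun x => ?_⟩
    have h1 : Tendsto (fun i => extL (lAct (sndL x) (f i) - rAct (f i) (sndL x))) l
        (𝓝 (extL (D0 (sndL x)))) :=
      (extL.continuous.tendsto _).comp (hf (sndL x))
    simpa only [ext_commutator, ← hDx] using h1
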